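/- An unsolvable term (a term with no head normal form) of the λ⊥-calculus has neither a left inverse nor a right inverse. -/
import Mathlib


/-- Terms of the λ⊥-calculus (de Bruijn indices). -/
inductive Tm : Type
  | var : ℕ → Tm
  | bot : Tm
  | lam : Tm → Tm
  | app : Tm → Tm → Tm
  deriving DecidableEq

namespace Tm

/-- Lift (shift by one) all de Bruijn indices ≥ k. -/
def lift : Tm → ℕ → Tm
  | var n, k => if n < k then var n else var (n+1)
  | bot, _ => bot
  | lam M, k => lam (lift M (k+1))
  | app M N, k => app (lift M k) (lift N k)

/-- Capture-avoiding substitution of N for variable k. -/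
def subst : Tm → ℕ → Tm → Tm
  | var n, k, N => if n < k then var n else if n = k then N else var (n-1)
  | bot, _, _ => bot
  | lam M, k, N => lam (subst M (k+1) (lift N 0))
  | app M P, k, N => app (subst M k N) (subst P k N)

/-- One-step β⊥-reduction (compatible closure). -/
inductive Step : Tm → Tm → Prop
  | beta (M N : Tm) : Step (app (lam M) N) (subst M 0 N)
  | botApp (N : Tm) : Step (app bot N) bot
  | botLam : Step (lam bot) bot
  | appL {M M'} (N) : Step M M' → Step (app M N) (app M' N)
  | appR (M) {N N'} : Step N N' → Step (app M N) (app M N')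
  | lamC {M M'} : Step M M' → Step (lam M) (lam M')

/-- Multi-step reduction. -/
def Red : Tm → Tm → Prop := Relation.ReflTransGen Step

/-- β⊥-conversion: M = N iff they have a common reduct. -/
def Conv (M N : Tm) : Prop := ∃ P, Red M P ∧ Red N P

/-- The identity combinator I = λx.x. -/
def iTm : Tm := lam (var 0)

/-- Composition M ∘ N = λz.M(Nz). -/
def comp (M N : Tm) : Tm := lam (app (lift M 0) (app (lift N 0) (var 0)))

/-- Apply M to a list of arguments. -/
def applist (M : Tm) (Ms : List Tm) : Tm := Ms.foldl app M

/-- Iterated λ-abstraction. -/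
def iterLam : ℕ → Tm → Tm
  | 0, M => M
  | n+1, M => lam (iterLam n M)

/-- The selector λt x₁ … xₘ. t  (a simple right inverse). -/
def sel (m : ℕ) : Tm := iterLam (m+1) (var m)

/-- Number of initial λ-abstractions of a term. -/
def leadLams : Tm → ℕ
  | lam M => leadLams M + 1
  | _ => 0

end Tm

mutual
/-- Strict intersection types μ ::= φ | ω | σ → μ. -/
inductive STy : Type
  | tvar : ℕ → STy
  | omega : STy
  | arrow : ITy → STy → STy
/-- Intersections σ ::= μ | σ ∧ σ. -/
inductive ITy : Type
  | strict : STy → ITy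
  | inter : ITy → ITy → ITy
end

/-- The subtyping preorder on (strict) intersection types. -/
inductive SubTy : ITy → ITy → Prop
  | refl (σ) : SubTy σ σ
  | trans {σ τ ρ} : SubTy σ τ → SubTy τ ρ → SubTy σ ρ
  | toOmega (σ) : SubTy σ (.strict .omega)
  | omegaArr : SubTy (.strict .omega) (.strict (.arrow (.strict .omega) .omega))
  | interL (σ τ) : SubTy (.inter σ τ) σ
  | interR (σ τ) : SubTy (.inter σ τ) τ
  | interMono {σ₁ σ₂ τ₁ τ₂} : SubTy σ₁ τ₁ → SubTy σ₂ τ₂ → SubTy (.inter σ₁ σ₂) (.inter τ₁ τ₂)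
  | arrow {σ τ : ITy} {μ ν : STy} : SubTy τ σ → SubTy (.strict μ) (.strict ν) →
      SubTy (.strict (.arrow σ μ)) (.strict (.arrow τ ν))

/-- σ ∼ τ : mutual subtyping. -/
def EqvTy (σ τ : ITy) : Prop := SubTy σ τ ∧ SubTy τ σ

/-- μ is a conjunct (component) of the intersection σ. -/
inductive IsComp : STy → ITy → Prop
  | strict (μ) : IsComp μ (.strict μ)
  | left {μ σ} (τ) : IsComp μ σ → IsComp μ (.inter σ τ)
  | right {μ τ} (σ) : IsComp μ τ → IsComp μ (.inter σ τ)

/-- The essential intersection type assignment system (contexts are de Bruijn lists). -/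
inductive Der : List ITy → Tm → STy → Prop
  | var {Γ n σ μ} : Γ[n]? = some σ → IsComp μ σ → Der Γ (.var n) μ
  | omega (Γ M) : Der Γ M .omega
  | sub {Γ M μ ν} : Der Γ M μ → SubTy (.strict μ) (.strict ν) → Der Γ M ν
  | lam {Γ M σ μ} : Der (σ :: Γ) M μ → Der Γ (.lam M) (.arrow σ μ)
  | app {Γ M N σ μ} : Der Γ M (.arrow σ μ) → (∀ ν, IsComp ν σ → Der Γ N ν) →
      Der Γ (.app M N) μ

/-- A strict type is inhabited if some closed term has it. -/
def InhabS (μ : STy) : Prop := ∃ M, Der [] M μ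

/-- An intersection is inhabited if a single closed term has all its conjuncts. -/
def InhabI (σ : ITy) : Prop := ∃ M, ∀ μ, IsComp μ σ → Der [] M μ

/-- σ → ρ is inhabited: one term inhabits σ → μ for every conjunct μ of ρ. -/
def InhabArrow (σ ρ : ITy) : Prop := ∃ M, ∀ μ, IsComp μ ρ → Der [] M (.arrow σ μ)

/-- ρ₁ → … → ρₘ → μ. -/
def arrows (l : List ITy) (μ : STy) : STy := l.foldr .arrow μ

/-- μ ◁ ν : μ is a retract of ν. -/
def Retract (μ ν : STy) : Prop :=
  ∃ L R, Der [] L (.arrow (.strict ν) μ) ∧ Der [] R (.arrow (.strict μ) ν) ∧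
    Tm.Conv (Tm.comp L R) Tm.iTm

/-- Head normal forms λx₁…xₙ.xⱼM₁…Mₘ. -/
inductive IsHnf : Tm → Prop
  | head (j : ℕ) (Ms : List Tm) : IsHnf (Tm.applist (Tm.var j) Ms)
  | abs {M : Tm} : IsHnf M → IsHnf (Tm.lam M)

/-- A term is solvable iff it reduces to a head normal form. -/
def Solvable (M : Tm) : Prop := ∃ N, Tm.Red M N ∧ IsHnf N

section NoInv
open Tm

namespace NoInv

/-! ### Renaming and parallel substitution infrastructure -/

def upr (f : ℕ → ℕ) : ℕ → ℕ
  | 0 => 0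
  | n+1 => f n + 1

def ren : Tm → (ℕ → ℕ) → Tm
  | .var n, f => .var (f n)
  | .bot, _ => .bot
  | .lam M, f => .lam (ren M (upr f))
  | .app M N, f => .app (ren M f) (ren N f)

def upE (σ : ℕ → Tm) : ℕ → Tm
  | 0 => .var 0
  | n+1 => Tm.lift (σ n) 0

def psubst : Tm → (ℕ → Tm) → Tm
  | .var n, σ => σ n
  | .bot, _ => .bot
  | .lam M, σ => .lam (psubst M (upE σ))
  | .app M N, σ => .app (psubst M σ) (psubst N σ)

def liftR (k : ℕ) : ℕ → ℕ := fun n => if n < k then n else n+1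

def substE (k : ℕ) (N : Tm) : ℕ → Tm :=
  fun n => if n < k then .var n else if n = k then N else .var (n-1)

theorem lift0_var (m : ℕ) : Tm.lift (Tm.var m) 0 = Tm.var (m+1) := by
  simp [Tm.lift]

theorem substE_lt {n k : ℕ} (N : Tm) (h : n < k) : substE k N n = Tm.var n := by
  simp [substE, h]

theorem substE_self (k : ℕ) (N : Tm) : substE k N k = N := by
  simp [substE]

theorem substE_gt {n k : ℕ} (N : Tm) (h : k < n) : substE k N n = Tm.var (n-1) := by
  simp only [substE]
  rw [if_neg (by omega), if_neg (by omega)]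

theorem substE_gt' {m k : ℕ} (N : Tm) (h : k ≤ m) : substE k N (m+1) = Tm.var m := by
  rw [substE_gt _ (by omega)]
  norm_num

theorem liftR_lt {n k : ℕ} (h : n < k) : liftR k n = n := by simp [liftR, h]

theorem liftR_ge {n k : ℕ} (h : k ≤ n) : liftR k n = n + 1 := by
  simp only [liftR]; rw [if_neg (by omega)]

theorem lift_eq_ren (M : Tm) : ∀ k, Tm.lift M k = ren M (liftR k) := by
  induction M with
  | var n => intro k; simp only [Tm.lift, ren, liftR]; split_ifs <;> rfl
  | bot => intro k; rfl
  | lam M ih =>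
      intro k
      have h : upr (liftR k) = liftR (k+1) := by
        funext n; cases n with
        | zero => simp [upr, liftR]
        | succ n => simp only [upr, liftR]; split_ifs <;> omega
      simp only [Tm.lift, ren, ih, h]
  | app M N ihM ihN => intro k; simp only [Tm.lift, ren, ihM, ihN]

theorem subst_eq_psubst (M : Tm) : ∀ k N, Tm.subst M k N = psubst M (substE k N) := by
  induction M with
  | var n => intro k N; rfl
  | bot => intro k N; rfl
  | lam M ih =>
      intro k N
      have h : upE (substE k N) = substE (k+1) (Tm.lift N 0) := by
        funext n; cases n with
        | zero => simp [upE, substE]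
        | succ n =>
            show Tm.lift (substE k N n) 0 = substE (k+1) (Tm.lift N 0) (n+1)
            rcases Nat.lt_trichotomy n k with h1 | h1 | h1
            · rw [substE_lt _ h1, substE_lt _ (by omega), lift0_var]
            · subst h1; rw [substE_self, substE_self]
            · rw [substE_gt _ h1, substE_gt _ (by omega), lift0_var]
              congr 1; omega
      simp only [Tm.subst, psubst, ih, h]
  | app M P ihM ihP => intro k N; simp only [Tm.subst, psubst, ihM, ihP]

theorem ren_ren (M : Tm) : ∀ f g, ren (ren M f) g = ren M (fun n => g (f n)) := by
  induction M with
  | var n => intros; rfl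
  | bot => intros; rfl
  | lam M ih =>
      intro f g
      have h : (fun n => upr g (upr f n)) = upr (fun n => g (f n)) := by
        funext n; cases n <;> rfl
      simp only [ren, ih, h]
  | app M N ihM ihN => intro f g; simp only [ren, ihM, ihN]

theorem psubst_ren (M : Tm) : ∀ f σ, psubst (ren M f) σ = psubst M (fun n => σ (f n)) := by
  induction M with
  | var n => intros; rfl
  | bot => intros; rfl
  | lam M ih =>
      intro f σ
      have h : (fun n => upE σ (upr f n)) = upE (fun n => σ (f n)) := by
        funext n; cases n <;> rfl
      simp only [ren, psubst, ih, h]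
  | app M N ihM ihN => intro f σ; simp only [ren, psubst, ihM, ihN]

theorem psubst_congr {M : Tm} {σ σ' : ℕ → Tm} (h : ∀ n, σ n = σ' n) :
    psubst M σ = psubst M σ' := by
  have : σ = σ' := funext h
  rw [this]

theorem ren_psubst (M : Tm) : ∀ σ f, ren (psubst M σ) f = psubst M (fun n => ren (σ n) f) := by
  induction M with
  | var n => intros; rfl
  | bot => intros; rfl
  | lam M ih =>
      intro σ f
      have h : (fun n => ren (upE σ n) (upr f)) = upE (fun n => ren (σ n) f) := by
        funext n; cases n with
        | zero => rfl
        | succ n =>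
            show ren (Tm.lift (σ n) 0) (upr f) = Tm.lift (ren (σ n) f) 0
            rw [lift_eq_ren (σ n) 0, ren_ren, lift_eq_ren (ren (σ n) f) 0, ren_ren]
            exact congrArg (ren (σ n)) (funext fun m => by simp [liftR, upr])
      simp only [ren, psubst, ih, h]
  | app M N ihM ihN => intro σ f; simp only [ren, psubst, ihM, ihN]

theorem psubst_psubst (M : Tm) :
    ∀ σ τ, psubst (psubst M σ) τ = psubst M (fun n => psubst (σ n) τ) := by
  induction M with
  | var n => intros; rfl
  | bot => intros; rfl
  | lam M ih =>
      intro σ τ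
      have h : (fun n => psubst (upE σ n) (upE τ)) = upE (fun n => psubst (σ n) τ) := by
        funext n; cases n with
        | zero => rfl
        | succ n =>
            show psubst (Tm.lift (σ n) 0) (upE τ) = Tm.lift (psubst (σ n) τ) 0
            rw [lift_eq_ren (σ n) 0, psubst_ren, lift_eq_ren _ 0, ren_psubst]
            apply psubst_congr; intro m
            show upE τ (liftR 0 m) = ren (τ m) (liftR 0)
            rw [liftR_ge (Nat.zero_le m)]
            show Tm.lift (τ m) 0 = ren (τ m) (liftR 0)
            exact lift_eq_ren _ 0
      simp only [psubst, ih, h]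
  | app M N ihM ihN => intro σ τ; simp only [psubst, ihM, ihN]

theorem psubst_var (M : Tm) : psubst M Tm.var = M := by
  induction M with
  | var n => rfl
  | bot => rfl
  | lam M ih =>
      have h : upE Tm.var = Tm.var := by
        funext n; cases n with
        | zero => rfl
        | succ n => exact lift0_var n
      simp only [psubst, h, ih]
  | app M N ihM ihN => simp only [psubst, ihM, ihN]

/-- I4 : substituting for a freshly lifted variable is the identity. -/
theorem subst_lift (M : Tm) (k : ℕ) (N : Tm) : Tm.subst (Tm.lift M k) k N = M := by
  rw [lift_eq_ren, subst_eq_psubst, psubst_ren]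
  have h : (fun n => substE k N (liftR k n)) = Tm.var := by
    funext n
    show substE k N (liftR k n) = Tm.var n
    rcases Nat.lt_or_ge n k with h1 | h1
    · rw [liftR_lt h1, substE_lt _ h1]
    · rw [liftR_ge h1, substE_gt' _ h1]
  rw [h, psubst_var]

/-- I5 : substitution composition. -/
theorem subst_subst (M : Tm) (Q : Tm) (k : ℕ) (N : Tm) :
    Tm.subst (Tm.subst M 0 Q) k N
      = Tm.subst (Tm.subst M (k+1) (Tm.lift N 0)) 0 (Tm.subst Q k N) := by
  rw [subst_eq_psubst M 0 Q, subst_eq_psubst _ k N, psubst_psubst,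
      subst_eq_psubst M (k+1), subst_eq_psubst _ 0, psubst_psubst]
  apply psubst_congr; intro n
  cases n with
  | zero =>
      show psubst (substE 0 Q 0) (substE k N)
          = psubst (substE (k+1) (Tm.lift N 0) 0) (substE 0 (Tm.subst Q k N))
      rw [show substE 0 Q 0 = Q from rfl, substE_lt _ (by omega : 0 < k+1)]
      show psubst Q (substE k N) = substE 0 (Tm.subst Q k N) 0
      rw [show substE 0 (Tm.subst Q k N) 0 = Tm.subst Q k N from rfl, ← subst_eq_psubst]
  | succ m =>
      show psubst (substE 0 Q (m+1)) (substE k N)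
          = psubst (substE (k+1) (Tm.lift N 0) (m+1)) (substE 0 (Tm.subst Q k N))
      rw [substE_gt' _ (Nat.zero_le m)]
      show substE k N m = _
      rcases Nat.lt_trichotomy m k with h2 | h2 | h2
      · rw [substE_lt _ h2, substE_lt _ (by omega : m+1 < k+1)]
        show Tm.var m = substE 0 (Tm.subst Q k N) (m+1)
        rw [substE_gt' _ (Nat.zero_le m)]
      · subst h2
        rw [substE_self, substE_self]
        rw [← subst_eq_psubst, subst_lift]
      · rw [substE_gt _ h2, substE_gt' _ (by omega : k+1 ≤ m)]
        show Tm.var (m-1) = substE 0 (Tm.subst Q k N) m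
        obtain ⟨m', rfl⟩ : ∃ m', m = m' + 1 := ⟨m-1, by omega⟩
        rw [substE_gt' _ (Nat.zero_le m')]
        simp

/-- I3 : lift over subst. -/
theorem lift_subst (M : Tm) (Q : Tm) (j : ℕ) :
    Tm.lift (Tm.subst M 0 Q) j = Tm.subst (Tm.lift M (j+1)) 0 (Tm.lift Q j) := by
  rw [subst_eq_psubst M 0 Q, lift_eq_ren _ j, ren_psubst,
      lift_eq_ren M (j+1), subst_eq_psubst _ 0, psubst_ren]
  apply psubst_congr; intro n
  cases n with
  | zero =>
      show ren (substE 0 Q 0) (liftR j) = substE 0 (Tm.lift Q j) (liftR (j+1) 0)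
      rw [show substE 0 Q 0 = Q from rfl, liftR_lt (by omega : 0 < j+1)]
      show ren Q (liftR j) = Tm.lift Q j
      rw [lift_eq_ren]
  | succ m =>
      show ren (substE 0 Q (m+1)) (liftR j) = substE 0 (Tm.lift Q j) (liftR (j+1) (m+1))
      rw [substE_gt' _ (Nat.zero_le m)]
      show Tm.var (liftR j m) = _
      rcases Nat.lt_or_ge m j with h2 | h2
      · rw [liftR_lt (by omega : m+1 < j+1), liftR_lt h2, substE_gt' _ (Nat.zero_le m)]
      · rw [liftR_ge (by omega : j+1 ≤ m+1), liftR_ge h2, substE_gt' _ (Nat.zero_le (m+1))]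

/-- renaming form of beta-substitution commuting. -/
theorem ren_subst (P Q : Tm) (f : ℕ → ℕ) :
    ren (Tm.subst P 0 Q) f = Tm.subst (ren P (upr f)) 0 (ren Q f) := by
  rw [subst_eq_psubst P 0 Q, ren_psubst, subst_eq_psubst _ 0, psubst_ren]
  apply psubst_congr; intro n
  cases n with
  | zero => rfl
  | succ m =>
      show ren (substE 0 Q (m+1)) f = substE 0 (ren Q f) (upr f (m+1))
      rw [substE_gt' _ (Nat.zero_le m)]
      show Tm.var (f m) = substE 0 (ren Q f) (f m + 1)
      rw [substE_gt' _ (Nat.zero_le (f m))]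

/-- psubst of a beta-substitution. -/
theorem psubst_subst (P Q : Tm) (σ : ℕ → Tm) :
    psubst (Tm.subst P 0 Q) σ
      = Tm.subst (psubst P (upE σ)) 0 (psubst Q σ) := by
  rw [subst_eq_psubst P 0 Q, psubst_psubst, subst_eq_psubst _ 0, psubst_psubst]
  apply psubst_congr; intro n
  cases n with
  | zero => rfl
  | succ m =>
      show psubst (substE 0 Q (m+1)) σ = psubst (Tm.lift (σ m) 0) (substE 0 (psubst Q σ))
      rw [substE_gt' _ (Nat.zero_le m), ← subst_eq_psubst, subst_lift]
      rfl

/-! ### Weak head reduction -/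

inductive WH : Tm → Tm → Prop
  | beta (P Q) : WH (.app (.lam P) Q) (Tm.subst P 0 Q)
  | bApp (Q) : WH (.app .bot Q) .bot
  | appC {P P'} (Q) : WH P P' → WH (.app P Q) (.app P' Q)

def Whn (T : Tm) : Prop := ∀ U, ¬ WH T U

theorem whn_var (n : ℕ) : Whn (.var n) := fun U h => by cases h
theorem whn_bot : Whn .bot := fun U h => by cases h
theorem whn_lam (M : Tm) : Whn (.lam M) := fun U h => by cases h

inductive NeuT : Tm → Prop
  | var (n : ℕ) : NeuT (.var n)
  | app {P : Tm} (Q : Tm) : NeuT P → NeuT (.app P Q)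

theorem NeuT.whn {P : Tm} (h : NeuT P) : Whn P := by
  induction h with
  | var n => exact whn_var n
  | app Q hP ih =>
      intro U hU
      cases hU with
      | beta P Q => cases hP
      | bApp Q => cases hP
      | appC Q h => exact ih _ h

theorem neu_of_whn : ∀ (A : Tm), Whn A → (∀ R, A ≠ .lam R) → A ≠ .bot → NeuT A := by
  intro A
  induction A with
  | var n => intros; exact NeuT.var n
  | bot => intro _ _ h; exact absurd rfl h
  | lam M _ => intro _ h _; exact absurd rfl (h M)
  | app A B ihA _ =>
      intro hwhn _ _
      refine NeuT.app B (ihA ?_ ?_ ?_)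
      · intro U hU; exact hwhn _ (WH.appC B hU)
      · rintro R rfl; exact hwhn _ (WH.beta R B)
      · rintro rfl; exact hwhn _ (WH.bApp B)

inductive Ev : ℕ → Tm → Tm → Prop
  | refl {T : Tm} (n : ℕ) : Whn T → Ev n T T
  | step {T T₁ W : Tm} {n : ℕ} : WH T T₁ → Ev n T₁ W → Ev (n+1) T W

def Ev' (T W : Tm) : Prop := ∃ n, Ev n T W

theorem Ev.whnEnd {n T W} (h : Ev n T W) : Whn W := by
  induction h with
  | refl n h => exact h
  | step _ _ ih => exact ih

theorem Ev'.whnEnd {T W} (h : Ev' T W) : Whn W := h.choose_spec.whnEnd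

theorem ev_whn_eq {n : ℕ} {T W : Tm} (hw : Whn T) (h : Ev n T W) : W = T := by
  cases h with
  | refl => rfl
  | step hw1 _ => exact absurd hw1 (hw _)

theorem Ev'.refl {T : Tm} (h : Whn T) : Ev' T T := ⟨0, Ev.refl 0 h⟩

theorem Ev'.stepL {T T₁ W : Tm} (h : WH T T₁) (h2 : Ev' T₁ W) : Ev' T W := by
  obtain ⟨n, h2⟩ := h2; exact ⟨n+1, Ev.step h h2⟩

/-- Decomposition of an evaluation of an application. -/
theorem dec_app : ∀ {n T W}, Ev n T W → ∀ {A B : Tm}, T = .app A B →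
    ∃ k V, k ≤ n ∧ Ev k A V ∧
      ((∃ R, V = .lam R ∧ ∃ j, j + k < n ∧ Ev j (Tm.subst R 0 B) W) ∨
       (V = .bot ∧ W = .bot) ∨
       (NeuT V ∧ W = .app V B)) := by
  intro n T W h
  induction h with
  | refl n hw =>
      rintro A B rfl
      have hA : NeuT A := by
        refine neu_of_whn A ?_ ?_ ?_
        · intro U hU; exact hw _ (WH.appC B hU)
        · rintro R rfl; exact hw _ (WH.beta R B)
        · rintro rfl; exact hw _ (WH.bApp B)
      exact ⟨0, A, Nat.zero_le n, Ev.refl 0 hA.whn, Or.inr (Or.inr ⟨hA, rfl⟩)⟩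
  | step hwh hev ih =>
      rintro A B rfl
      cases hwh with
      | beta P Q =>
          exact ⟨0, .lam P, Nat.zero_le _, Ev.refl 0 (whn_lam P),
            Or.inl ⟨P, rfl, _, by omega, hev⟩⟩
      | bApp Q =>
          have := ev_whn_eq whn_bot hev
          exact ⟨0, .bot, Nat.zero_le _, Ev.refl 0 whn_bot, Or.inr (Or.inl ⟨rfl, this⟩)⟩
      | appC Q hP =>
          obtain ⟨k, V, hk, hEv, hcase⟩ := ih rfl
          refine ⟨k+1, V, by omega, Ev.step hP hEv, ?_⟩
          rcases hcase with ⟨R, rfl, j, hj, hEv2⟩ | h | h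
          · exact Or.inl ⟨R, rfl, j, by omega, hEv2⟩
          · exact Or.inr (Or.inl h)
          · exact Or.inr (Or.inr h)

theorem ev'_app_lam : ∀ {k A V}, Ev k A V → ∀ {R B W}, V = .lam R →
    Ev' (Tm.subst R 0 B) W → Ev' (.app A B) W := by
  intro k A V h
  induction h with
  | refl n hw => rintro R B W rfl h2; exact Ev'.stepL (WH.beta _ _) h2
  | step hwh _ ih => rintro R B W rfl h2; exact Ev'.stepL (WH.appC _ hwh) (ih rfl h2)

theorem ev'_app_bot : ∀ {k A V}, Ev k A V → V = .bot → ∀ (B : Tm), Ev' (.app A B) .bot := by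
  intro k A V h
  induction h with
  | refl n hw => rintro rfl B; exact Ev'.stepL (WH.bApp B) (Ev'.refl whn_bot)
  | step hwh _ ih => rintro rfl B; exact Ev'.stepL (WH.appC _ hwh) (ih rfl B)

theorem ev'_app_neu : ∀ {k A V}, Ev k A V → NeuT V → ∀ (B : Tm), Ev' (.app A B) (.app V B) := by
  intro k A V h
  induction h with
  | refl n hw => intro hV B; exact Ev'.refl (NeuT.app B hV).whn
  | step hwh _ ih => intro hV B; exact Ev'.stepL (WH.appC _ hwh) (ih hV B)

/-- Weak head steps are closed under substitution. -/
theorem WH.substC {T T₁ : Tm} (h : WH T T₁) (k : ℕ) (N : Tm) :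
    WH (Tm.subst T k N) (Tm.subst T₁ k N) := by
  induction h with
  | beta P Q =>
      show WH (.app (.lam (Tm.subst P (k+1) (Tm.lift N 0))) (Tm.subst Q k N)) _
      rw [subst_subst]
      exact WH.beta _ _
  | bApp Q => exact WH.bApp _
  | appC Q h ih => exact WH.appC _ ih

/-- Weak head steps are closed under lifting. -/
theorem WH.liftC {T T₁ : Tm} (h : WH T T₁) (k : ℕ) :
    WH (Tm.lift T k) (Tm.lift T₁ k) := by
  induction h with
  | beta P Q =>
      show WH (.app (.lam (Tm.lift P (k+1))) (Tm.lift Q k)) _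
      rw [lift_subst]
      exact WH.beta _ _
  | bApp Q => exact WH.bApp _
  | appC Q h ih => exact WH.appC _ ih

theorem whn_of_subst {T : Tm} {k N} (h : Whn (Tm.subst T k N)) : Whn T :=
  fun U hU => h _ (hU.substC k N)

theorem whn_of_lift {T : Tm} {k} (h : Whn (Tm.lift T k)) : Whn T :=
  fun U hU => h _ (hU.liftC k)

/-- Reflection of weak head steps along substitution. -/
theorem wh_subst_refl : ∀ (T : Tm) {k N Y}, WH (Tm.subst T k N) Y →
    NeuT T ∨ ∃ T₁, WH T T₁ ∧ Y = Tm.subst T₁ k N := by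
  intro T
  induction T with
  | var n => intro k N Y h; exact Or.inl (NeuT.var n)
  | bot => intro k N Y h; cases h
  | lam M _ => intro k N Y h; cases h
  | app A B ihA _ =>
      intro k N Y h
      cases A with
      | var n => exact Or.inl (NeuT.app _ (NeuT.var n))
      | bot =>
          cases h with
          | bApp => exact Or.inr ⟨.bot, WH.bApp B, rfl⟩
          | appC _ h => cases h
      | lam P =>
          cases h with
          | beta => exact Or.inr ⟨Tm.subst P 0 B, WH.beta P B, (subst_subst P B k N).symm⟩
          | appC _ h => cases h
      | app A₁ A₂ =>
          cases h with
          | appC _ h =>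
              rcases ihA h with hneu | ⟨T₁, hwh, rfl⟩
              · exact Or.inl (NeuT.app _ hneu)
              · exact Or.inr ⟨.app T₁ B, WH.appC _ hwh, rfl⟩

/-- Reflection of weak head steps along lifting. -/
theorem wh_lift_refl : ∀ (T : Tm) {k Y}, WH (Tm.lift T k) Y →
    ∃ T₁, WH T T₁ ∧ Y = Tm.lift T₁ k := by
  intro T
  induction T with
  | var n =>
      intro k Y h
      exfalso
      rcases (by simp [Tm.lift]; split_ifs <;> exact ⟨_, rfl⟩ : ∃ m, Tm.lift (.var n) k = Tm.var m)
        with ⟨m, hm⟩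
      rw [hm] at h; cases h
  | bot => intro k Y h; cases h
  | lam M _ => intro k Y h; cases h
  | app A B ihA _ =>
      intro k Y h
      cases A with
      | var n =>
          exfalso
          rcases (by simp [Tm.lift]; split_ifs <;> exact ⟨_, rfl⟩ : ∃ m, Tm.lift (.var n) k = Tm.var m)
            with ⟨m, hm⟩
          rw [show Tm.lift (Tm.app (Tm.var n) B) k = .app (.var m) (Tm.lift B k) from by
            show Tm.app (Tm.lift (.var n) k) (Tm.lift B k) = _; rw [hm]] at h
          cases h with
          | appC _ h => cases h
      | bot =>
          cases h with
          | bApp => exact ⟨.bot, WH.bApp B, rfl⟩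
          | appC _ h => cases h
      | lam P =>
          cases h with
          | beta => exact ⟨Tm.subst P 0 B, WH.beta P B, (lift_subst P B k).symm⟩
          | appC _ h => cases h
      | app A₁ A₂ =>
          cases h with
          | appC _ h =>
              rcases ihA h with ⟨T₁, hwh, rfl⟩
              exact ⟨.app T₁ B, WH.appC _ hwh, rfl⟩

theorem lift_eq_lam {A : Tm} {k P} (h : Tm.lift A k = .lam P) :
    ∃ A', A = .lam A' ∧ P = Tm.lift A' (k+1) := by
  cases A with
  | var n => exfalso; revert h; simp only [Tm.lift]; split_ifs <;> intro h <;> cases h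
  | bot => cases h
  | lam M => exact ⟨M, rfl, by cases h; rfl⟩
  | app _ _ => cases h

theorem lift_eq_bot {A : Tm} {k} (h : Tm.lift A k = .bot) : A = .bot := by
  cases A with
  | var n => exfalso; revert h; simp only [Tm.lift]; split_ifs <;> intro h <;> cases h
  | bot => rfl
  | lam M => cases h
  | app _ _ => cases h

theorem lift_ne_var0 (A : Tm) : Tm.lift A 0 ≠ .var 0 := by
  cases A with
  | var n => simp only [Tm.lift]; rw [if_neg (by omega)]; intro h; cases h; 
  | bot => intro h; cases h
  | lam M => intro h; cases h
  | app _ _ => intro h; cases h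

/-- Reflection of arbitrary steps along lifting (shape only). -/
theorem step_lift_shape : ∀ (T : Tm) {k Y}, Tm.Step (Tm.lift T k) Y →
    ∃ T₁, Y = Tm.lift T₁ k := by
  intro T
  induction T with
  | var n =>
      intro k Y h
      exfalso
      rcases (by simp [Tm.lift]; split_ifs <;> exact ⟨_, rfl⟩ : ∃ m, Tm.lift (.var n) k = Tm.var m)
        with ⟨m, hm⟩
      rw [hm] at h; cases h
  | bot => intro k Y h; cases h
  | lam M ihM =>
      intro k Y h
      have : Tm.lift (Tm.lam M) k = .lam (Tm.lift M (k+1)) := rfl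
      rw [this] at h
      generalize hM : Tm.lift M (k+1) = LM at h
      cases h with
      | botLam => exact ⟨.bot, rfl⟩
      | lamC h =>
          rw [← hM] at h
          obtain ⟨T₁, rfl⟩ := ihM h
          exact ⟨.lam T₁, rfl⟩
  | app A B ihA ihB =>
      intro k Y h
      have : Tm.lift (Tm.app A B) k = .app (Tm.lift A k) (Tm.lift B k) := rfl
      rw [this] at h
      generalize hA : Tm.lift A k = LA at h
      generalize hB : Tm.lift B k = LB at h
      cases h with
      | beta P N =>
          obtain ⟨A', rfl, rfl⟩ := lift_eq_lam hA
          subst hB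
          exact ⟨Tm.subst A' 0 B, (lift_subst A' B k).symm⟩
      | botApp N => exact ⟨.bot, rfl⟩
      | appL N h =>
          subst hA
          obtain ⟨T₁, rfl⟩ := ihA h
          subst hB
          exact ⟨.app T₁ B, rfl⟩
      | appR Mx h =>
          subst hB
          obtain ⟨T₁, rfl⟩ := ihB h
          subst hA
          exact ⟨.app A T₁, rfl⟩

/-! ### Parallel reduction -/

inductive Par : Tm → Tm → Prop
  | var (n : ℕ) : Par (.var n) (.var n)
  | bot : Par .bot .bot
  | lam {M M' : Tm} : Par M M' → Par (.lam M) (.lam M')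
  | app {M M' N N' : Tm} : Par M M' → Par N N' → Par (.app M N) (.app M' N')
  | beta {P P' Q Q' : Tm} : Par P P' → Par Q Q' → Par (.app (.lam P) Q) (Tm.subst P' 0 Q')
  | botApp (N : Tm) : Par (.app .bot N) .bot
  | botLam : Par (.lam .bot) .bot

theorem Par.rfl : ∀ (M : Tm), Par M M := by
  intro M
  induction M with
  | var n => exact Par.var n
  | bot => exact Par.bot
  | lam M ih => exact Par.lam ih
  | app M N ihM ihN => exact Par.app ihM ihN

theorem step_to_par {M N : Tm} (h : Tm.Step M N) : Par M N := by
  induction h with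
  | beta M N => exact Par.beta (Par.rfl M) (Par.rfl N)
  | botApp N => exact Par.botApp N
  | botLam => exact Par.botLam
  | appL N _ ih => exact Par.app ih (Par.rfl N)
  | appR M _ ih => exact Par.app (Par.rfl M) ih
  | lamC _ ih => exact Par.lam ih

theorem Par.renC {M M' : Tm} (h : Par M M') : ∀ f, Par (ren M f) (ren M' f) := by
  induction h with
  | var n => intro f; exact Par.rfl _
  | bot => intro f; exact Par.bot
  | lam _ ih => intro f; exact Par.lam (ih _)
  | app _ _ ihM ihN => intro f; exact Par.app (ihM f) (ihN f)
  | beta _ _ ihP ihQ =>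
      intro f
      show Par (.app (.lam (ren _ (upr f))) (ren _ f)) (ren (Tm.subst _ 0 _) f)
      rw [ren_subst]
      exact Par.beta (ihP (upr f)) (ihQ f)
  | botApp N => intro f; exact Par.botApp _
  | botLam => intro f; exact Par.botLam

theorem Par.liftC {M M' : Tm} (h : Par M M') (k : ℕ) :
    Par (Tm.lift M k) (Tm.lift M' k) := by
  rw [lift_eq_ren, lift_eq_ren]; exact h.renC _

theorem Par.psubstC {M M' : Tm} (h : Par M M') :
    ∀ {σ σ' : ℕ → Tm}, (∀ i, Par (σ i) (σ' i)) → Par (psubst M σ) (psubst M' σ') := by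
  induction h with
  | var n => intro σ σ' hσ; exact hσ n
  | bot => intro σ σ' hσ; exact Par.bot
  | lam _ ih =>
      intro σ σ' hσ
      refine Par.lam (ih ?_)
      intro i; cases i with
      | zero => exact Par.var 0
      | succ i => exact (hσ i).liftC 0
  | app _ _ ihM ihN => intro σ σ' hσ; exact Par.app (ihM hσ) (ihN hσ)
  | beta _ _ ihP ihQ =>
      intro σ σ' hσ
      show Par (.app (.lam (psubst _ (upE σ))) (psubst _ σ)) (psubst (Tm.subst _ 0 _) σ')
      rw [psubst_subst]
      refine Par.beta (ihP ?_) (ihQ hσ)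
      intro i; cases i with
      | zero => exact Par.var 0
      | succ i => exact (hσ i).liftC 0
  | botApp N => intro σ σ' hσ; exact Par.botApp _
  | botLam => intro σ σ' hσ; exact Par.botLam

theorem Par.substC {P P' Q Q' : Tm} (hP : Par P P') (hQ : Par Q Q') (k : ℕ) :
    Par (Tm.subst P k Q) (Tm.subst P' k Q') := by
  rw [subst_eq_psubst, subst_eq_psubst]
  refine hP.psubstC ?_
  intro i
  unfold substE
  split_ifs with h1 h2
  · exact Par.rfl _
  · exact hQ
  · exact Par.rfl _

/-! ### Inversion of parallel reduction at weak head normal forms -/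

theorem par_whn_lam' {V T : Tm} (h : Par V T) (hw : Whn V) :
    ∀ {R' : Tm}, T = .lam R' → ∃ R, V = .lam R ∧ Par R R' := by
  cases h with
  | var n => intro R' heq; cases heq
  | bot => intro R' heq; cases heq
  | lam h => intro R' heq; cases heq; exact ⟨_, rfl, h⟩
  | app hM hN => intro R' heq; cases heq
  | beta hP hQ => intro R' heq; exact absurd (WH.beta _ _) (hw _)
  | botApp N => intro R' heq; cases heq
  | botLam => intro R' heq; cases heq

theorem par_whn_lam {V R' : Tm} (h : Par V (.lam R')) (hw : Whn V) :
    ∃ R, V = .lam R ∧ Par R R' := par_whn_lam' h hw rfl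

theorem par_whn_bot' {V T : Tm} (h : Par V T) (hw : Whn V) :
    T = .bot → V = .bot ∨ V = .lam .bot := by
  cases h with
  | var n => intro heq; cases heq
  | bot => intro _; exact Or.inl rfl
  | lam h => intro heq; cases heq
  | app hM hN => intro heq; cases heq
  | beta hP hQ => intro heq; exact absurd (WH.beta _ _) (hw _)
  | botApp N => intro heq; exact absurd (WH.bApp _) (hw _)
  | botLam => intro _; exact Or.inr rfl

theorem par_whn_bot {V : Tm} (h : Par V .bot) (hw : Whn V) :
    V = .bot ∨ V = .lam .bot := par_whn_bot' h hw rfl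

theorem par_whn_neu {V V' : Tm} (h : Par V V') (hw : Whn V) (hn : NeuT V') : NeuT V := by
  induction h with
  | var n => exact NeuT.var n
  | bot => cases hn
  | lam _ _ => cases hn
  | app hM hN ihM _ =>
      cases hn with
      | app _ hM' =>
          refine NeuT.app _ (ihM ?_ hM')
          intro U hU; exact hw _ (WH.appC _ hU)
  | beta hP hQ _ _ => exact absurd (WH.beta _ _) (hw _)
  | botApp N => cases hn
  | botLam => cases hn

/-! ### The key expansion lemma -/

def consE (Q : Tm) (σ : ℕ → Tm) : ℕ → Tm
  | 0 => Q
  | n+1 => σ n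

theorem subst_psubst_up (P : Tm) (σ : ℕ → Tm) (X : Tm) :
    Tm.subst (psubst P (upE σ)) 0 X = psubst P (consE X σ) := by
  rw [subst_eq_psubst, psubst_psubst]
  apply psubst_congr; intro n
  cases n with
  | zero => rfl
  | succ m =>
      show psubst (Tm.lift (σ m) 0) (substE 0 X) = σ m
      rw [← subst_eq_psubst, subst_lift]

theorem ev_app_bot_inv : ∀ {n T W}, Ev n T W → ∀ {B}, T = .app .bot B → W = .bot := by
  intro n T W h
  induction h with
  | refl n hw => rintro B rfl; exact absurd (WH.bApp B) (hw _)
  | step hwh hev ih =>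
      rintro B rfl
      cases hwh with
      | bApp => exact ev_whn_eq whn_bot (by assumption)
      | appC _ h => cases h

def Phi (n : ℕ) : Prop :=
  ∀ {T T' W' : Tm}, Par T T' → Ev n T' W' → ∃ W, Ev' T W ∧ Par W W'

theorem psi (n : ℕ) (ihΦ : ∀ m, m < n → Phi m) :
    ∀ {R R' : Tm}, Par R R' → ∀ (σ σ' : ℕ → Tm), (∀ i, Par (σ i) (σ' i)) →
    (∀ i k W', k ≤ n → Ev k (σ' i) W' → ∃ W, Ev' (σ i) W ∧ Par W W') →
    ∀ k, k ≤ n → ∀ W', Ev k (psubst R' σ') W' → ∃ W, Ev' (psubst R σ) W ∧ Par W W' := by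
  intro R R' d
  induction d with
  | var i =>
      intro σ σ' hpar henv k hk W' hev
      exact henv i k W' hk hev
  | bot =>
      intro σ σ' hpar henv k hk W' hev
      have hW : W' = .bot := ev_whn_eq whn_bot hev
      subst hW
      exact ⟨.bot, Ev'.refl whn_bot, Par.bot⟩
  | @lam A A' dA ihA =>
      intro σ σ' hpar henv k hk W' hev
      have hW : W' = .lam (psubst A' (upE σ')) := ev_whn_eq (whn_lam _) hev
      subst hW
      refine ⟨.lam (psubst A (upE σ)), Ev'.refl (whn_lam _), Par.lam (dA.psubstC ?_)⟩
      intro i; cases i with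
      | zero => exact Par.var 0
      | succ i => exact (hpar i).liftC 0
  | @app M M' N N' dM dN ihM ihN =>
      intro σ σ' hpar henv k hk W' hev
      obtain ⟨k₁, V', hk₁, hevA, hcase⟩ := dec_app hev rfl
      obtain ⟨V, hevV, hparV⟩ := ihM σ σ' hpar henv k₁ (le_trans hk₁ hk) V' hevA
      have hwV : Whn V := hevV.whnEnd
      rcases hcase with ⟨R₁', rfl, j, hj, hev2⟩ | ⟨rfl, rfl⟩ | ⟨hneu, rfl⟩
      · obtain ⟨R₁, rfl, hparR⟩ := par_whn_lam hparV hwV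
        have hsub : Par (Tm.subst R₁ 0 (psubst N σ)) (Tm.subst R₁' 0 (psubst N' σ')) :=
          Par.substC hparR (dN.psubstC hpar) 0
        obtain ⟨W, hevW, hparW⟩ := ihΦ j (by omega) hsub hev2
        obtain ⟨n₁, hevV⟩ := hevV
        exact ⟨W, ev'_app_lam hevV rfl hevW, hparW⟩
      · rcases par_whn_bot hparV hwV with rfl | rfl
        · obtain ⟨n₁, hevV⟩ := hevV
          exact ⟨.bot, ev'_app_bot hevV rfl _, Par.bot⟩
        · obtain ⟨n₁, hevV⟩ := hevV
          refine ⟨.bot, ev'_app_lam hevV rfl ?_, Par.bot⟩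
          exact Ev'.refl whn_bot
      · have hneuV : NeuT V := par_whn_neu hparV hwV hneu
        obtain ⟨n₁, hevV⟩ := hevV
        exact ⟨.app V (psubst N σ), ev'_app_neu hevV hneuV _,
          Par.app hparV (dN.psubstC hpar)⟩
  | @beta P P' Q Q' dP dQ ihP ihQ =>
      intro σ σ' hpar henv k hk W' hev
      rw [show psubst (Tm.subst P' 0 Q') σ' = psubst P' (consE (psubst Q' σ') σ') from by
        rw [psubst_subst, subst_psubst_up]] at hev
      have hconspar : ∀ i, Par (consE (psubst Q σ) σ i) (consE (psubst Q' σ') σ' i) := by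
        intro i; cases i with
        | zero => exact dQ.psubstC hpar
        | succ i => exact hpar i
      have hconsgood : ∀ i k W', k ≤ n → Ev k (consE (psubst Q' σ') σ' i) W' →
          ∃ W, Ev' (consE (psubst Q σ) σ i) W ∧ Par W W' := by
        intro i; cases i with
        | zero => exact fun k W' hk hev => ihQ σ σ' hpar henv k hk W' hev
        | succ i => exact fun k W' hk hev => henv i k W' hk hev
      obtain ⟨W, hevW, hparW⟩ :=
        ihP (consE (psubst Q σ) σ) (consE (psubst Q' σ') σ') hconspar hconsgood k hk W' hev
      refine ⟨W, Ev'.stepL (WH.beta _ _) ?_, hparW⟩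
      rw [subst_psubst_up]
      exact hevW
  | botApp N =>
      intro σ σ' hpar henv k hk W' hev
      have hW : W' = .bot := ev_whn_eq whn_bot hev
      subst hW
      exact ⟨.bot, Ev'.stepL (WH.bApp _) (Ev'.refl whn_bot), Par.bot⟩
  | botLam =>
      intro σ σ' hpar henv k hk W' hev
      have hW : W' = .bot := ev_whn_eq whn_bot hev
      subst hW
      exact ⟨.lam .bot, Ev'.refl (whn_lam _), Par.botLam⟩

theorem keyPhi : ∀ n, Phi n := by
  intro n
  induction n using Nat.strong_induction_on with
  | _ n ih =>
      intro T T' W' hpar hev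
      have henv : ∀ i k W', k ≤ n → Ev k (Tm.var i) W' →
          ∃ W, Ev' (Tm.var i) W ∧ Par W W' := by
        intro i k W' _ hev
        have := ev_whn_eq (whn_var i) hev
        subst this
        exact ⟨.var i, Ev'.refl (whn_var i), Par.var i⟩
      have := psi n ih hpar Tm.var Tm.var (fun i => Par.var i) henv n le_rfl W'
        (by rw [psubst_var]; exact hev)
      rw [psubst_var] at this
      exact this

/-- Expansion along parallel reduction of weak head evaluation. -/
theorem par_ev' {T T' W' : Tm} (hpar : Par T T') (hev : Ev' T' W') :
    ∃ W, Ev' T W ∧ Par W W' := by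
  obtain ⟨n, hev⟩ := hev
  exact keyPhi n hpar hev

/-! ### Solvability via weak head evaluation -/

inductive Sol : Tm → Prop
  | neu {T V : Tm} : Ev' T V → NeuT V → Sol T
  | lam {T R : Tm} : Ev' T (.lam R) → Sol R → Sol T

theorem sol_par_expansion : ∀ {T T' : Tm}, Par T T' → Sol T' → Sol T := by
  intro T T' hpar hsol
  induction hsol generalizing T with
  | neu hev hneu =>
      obtain ⟨W, hevW, hparW⟩ := par_ev' hpar hev
      exact Sol.neu hevW (par_whn_neu hparW hevW.whnEnd hneu)
  | lam hev hsolR ih =>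
      obtain ⟨W, hevW, hparW⟩ := par_ev' hpar hev
      obtain ⟨R, rfl, hparR⟩ := par_whn_lam hparW hevW.whnEnd
      exact Sol.lam hevW (ih hparR)

theorem sol_red_expansion : ∀ {T T' : Tm}, Tm.Red T T' → Sol T' → Sol T := by
  intro T T' hred
  induction hred using Relation.ReflTransGen.head_induction_on with
  | refl => exact id
  | head hstep _ ih => exact fun h => sol_par_expansion (step_to_par hstep) (ih h)

theorem wh_to_step {T T₁ : Tm} (h : WH T T₁) : Tm.Step T T₁ := by
  induction h with
  | beta P Q => exact Tm.Step.beta P Q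
  | bApp Q => exact Tm.Step.botApp Q
  | appC Q _ ih => exact Tm.Step.appL Q ih

theorem ev_to_red : ∀ {n T W}, Ev n T W → Tm.Red T W := by
  intro n T W h
  induction h with
  | refl _ _ => exact Relation.ReflTransGen.refl
  | step hwh _ ih => exact Relation.ReflTransGen.head (wh_to_step hwh) ih

theorem ev'_to_red {T W : Tm} (h : Ev' T W) : Tm.Red T W := ev_to_red h.choose_spec

theorem applist_snoc (M : Tm) (Ms : List Tm) (N : Tm) :
    Tm.applist M (Ms ++ [N]) = .app (Tm.applist M Ms) N := by
  simp [Tm.applist]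

theorem neu_applist {V : Tm} (h : NeuT V) : ∃ j Ms, V = Tm.applist (.var j) Ms := by
  induction h with
  | var n => exact ⟨n, [], rfl⟩
  | app Q _ ih =>
      obtain ⟨j, Ms, rfl⟩ := ih
      exact ⟨j, Ms ++ [Q], (applist_snoc _ _ _).symm⟩

theorem neuT_applist : ∀ (Ms : List Tm) (M : Tm), NeuT M → NeuT (Tm.applist M Ms) := by
  intro Ms
  induction Ms with
  | nil => intro M h; exact h
  | cons q qs ih =>
      intro M h
      exact ih (.app M q) (NeuT.app q h)

theorem neu_hnf {V : Tm} (h : NeuT V) : IsHnf V := by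
  obtain ⟨j, Ms, rfl⟩ := neu_applist h
  exact IsHnf.head j Ms

theorem red_lam {M N : Tm} (h : Tm.Red M N) : Tm.Red (Tm.lam M) (Tm.lam N) := by
  induction h with
  | refl => exact Relation.ReflTransGen.refl
  | tail _ hstep ih => exact Relation.ReflTransGen.tail ih (Tm.Step.lamC hstep)

theorem sol_solvable : ∀ {T : Tm}, Sol T → Solvable T := by
  intro T h
  induction h with
  | neu hev hneu => exact ⟨_, ev'_to_red hev, neu_hnf hneu⟩
  | lam hev _ ih =>
      obtain ⟨H, hred, hH⟩ := ih
      exact ⟨.lam H, Relation.ReflTransGen.trans (ev'_to_red hev) (red_lam hred), IsHnf.abs hH⟩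

theorem hnf_sol : ∀ {N : Tm}, IsHnf N → Sol N := by
  intro N h
  induction h with
  | head j Ms =>
      have hneu : NeuT (Tm.applist (.var j) Ms) := neuT_applist Ms _ (NeuT.var j)
      exact Sol.neu (Ev'.refl hneu.whn) hneu
  | abs _ ih => exact Sol.lam (Ev'.refl (whn_lam _)) ih

theorem solvable_sol {T : Tm} (h : Solvable T) : Sol T := by
  obtain ⟨N, hred, hN⟩ := h
  exact sol_red_expansion hred (hnf_sol hN)

theorem sol_bot_false (h : Sol .bot) : False := by
  cases h with
  | neu hev hneu =>
      obtain ⟨n, hev⟩ := hev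
      have := ev_whn_eq whn_bot hev
      subst this
      cases hneu
  | lam hev _ =>
      obtain ⟨n, hev⟩ := hev
      have := ev_whn_eq whn_bot hev
      cases this

theorem sol_app_bot_false {X : Tm} (h : Sol (.app .bot X)) : False := by
  cases h with
  | neu hev hneu =>
      obtain ⟨n, hev⟩ := hev
      have := ev_app_bot_inv hev rfl
      subst this
      cases hneu
  | lam hev _ =>
      obtain ⟨n, hev⟩ := hev
      have := ev_app_bot_inv hev rfl
      cases this

/-! ### Reflection of solvability along substitution and lifting -/

theorem ev_subst_refl : ∀ {n X W}, Ev n X W → ∀ {T : Tm} {k Q}, X = Tm.subst T k Q →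
    ∃ T₀, Ev' T T₀ ∧ (NeuT T₀ ∨ (Whn T₀ ∧ W = Tm.subst T₀ k Q)) := by
  intro n X W h
  induction h with
  | refl n hw =>
      rintro T k Q rfl
      exact ⟨T, Ev'.refl (whn_of_subst hw), Or.inr ⟨whn_of_subst hw, rfl⟩⟩
  | step hwh _ ih =>
      rintro T k Q rfl
      rcases wh_subst_refl T hwh with hneu | ⟨T₁, hwh₁, rfl⟩
      · exact ⟨T, Ev'.refl hneu.whn, Or.inl hneu⟩
      · obtain ⟨T₀, hev, hc⟩ := ih rfl
        exact ⟨T₀, Ev'.stepL hwh₁ hev, hc⟩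

theorem sol_subst_refl : ∀ {X : Tm}, Sol X → ∀ {T : Tm} {k Q}, X = Tm.subst T k Q → Sol T := by
  intro X h
  induction h with
  | neu hev hneu =>
      rintro T k Q rfl
      obtain ⟨n, hev⟩ := hev
      obtain ⟨T₀, hevT, hc⟩ := ev_subst_refl hev rfl
      rcases hc with h0 | ⟨hwhn, rfl⟩
      · exact Sol.neu hevT h0
      · cases T₀ with
        | var m => exact Sol.neu hevT (NeuT.var m)
        | bot => cases hneu
        | lam P => cases hneu
        | app T₁ T₂ =>
            refine Sol.neu hevT (neu_of_whn _ hwhn (fun R h => by cases h) (fun h => by cases h))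
  | lam hev hsolR ih =>
      rintro T k Q rfl
      obtain ⟨n, hev⟩ := hev
      obtain ⟨T₀, hevT, hc⟩ := ev_subst_refl hev rfl
      rcases hc with h0 | ⟨hwhn, heq⟩
      · exact Sol.neu hevT h0
      · cases T₀ with
        | var m => exact Sol.neu hevT (NeuT.var m)
        | bot => cases heq
        | lam T₀' =>
            cases heq
            exact Sol.lam hevT (ih rfl)
        | app T₁ T₂ => cases heq

theorem ev_lift_refl : ∀ {n X W}, Ev n X W → ∀ {T : Tm} {k}, X = Tm.lift T k →
    ∃ T₀, Ev' T T₀ ∧ W = Tm.lift T₀ k := by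
  intro n X W h
  induction h with
  | refl n hw =>
      rintro T k rfl
      exact ⟨T, Ev'.refl (whn_of_lift hw), rfl⟩
  | step hwh _ ih =>
      rintro T k rfl
      obtain ⟨T₁, hwh₁, rfl⟩ := wh_lift_refl T hwh
      obtain ⟨T₀, hev, hc⟩ := ih rfl
      exact ⟨T₀, Ev'.stepL hwh₁ hev, hc⟩

theorem neuT_of_lift : ∀ {T : Tm} {k}, NeuT (Tm.lift T k) → NeuT T := by
  intro T
  induction T with
  | var n => intro k _; exact NeuT.var n
  | bot => intro k h; cases h
  | lam M _ => intro k h; cases h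
  | app A B ihA _ =>
      intro k h
      cases h with
      | app _ hA => exact NeuT.app _ (ihA hA)

theorem sol_lift_refl : ∀ {X : Tm}, Sol X → ∀ {T : Tm} {k}, X = Tm.lift T k → Sol T := by
  intro X h
  induction h with
  | neu hev hneu =>
      rintro T k rfl
      obtain ⟨n, hev⟩ := hev
      obtain ⟨T₀, hevT, rfl⟩ := ev_lift_refl hev rfl
      exact Sol.neu hevT (neuT_of_lift hneu)
  | lam hev hsolR ih =>
      rintro T k rfl
      obtain ⟨n, hev⟩ := hev
      obtain ⟨T₀, hevT, heq⟩ := ev_lift_refl hev rfl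
      obtain ⟨T₀', rfl, rfl⟩ := lift_eq_lam heq.symm
      exact Sol.lam hevT (ih rfl)

/-! ### Bottom-approximation and a genericity-style simulation -/

inductive Approx : Tm → Tm → Prop
  | bot {T : Tm} : ¬ Sol T → Approx T .bot
  | var (n : ℕ) : Approx (.var n) (.var n)
  | botr : Approx .bot .bot
  | lam {A B : Tm} : Approx A B → Approx (.lam A) (.lam B)
  | app {A B C D : Tm} : Approx A B → Approx C D → Approx (.app A C) (.app B D)

theorem Approx.rfl : ∀ (M : Tm), Approx M M := by
  intro M
  induction M with
  | var n => exact Approx.var n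
  | bot => exact Approx.botr
  | lam M ih => exact Approx.lam ih
  | app M N ihM ihN => exact Approx.app ihM ihN

theorem approx_bot_src {B : Tm} (h : Approx .bot B) : B = .bot := by
  cases h with
  | bot _ => rfl
  | botr => rfl

theorem approx_lift : ∀ {A B : Tm}, Approx A B → ∀ k, Approx (Tm.lift A k) (Tm.lift B k) := by
  intro A B h
  induction h with
  | bot hns =>
      intro k
      exact Approx.bot (fun hs => hns (sol_lift_refl hs rfl))
  | var n => intro k; exact Approx.rfl _
  | botr => intro k; exact Approx.botr
  | lam _ ih => intro k; exact Approx.lam (ih (k+1))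
  | app _ _ ihM ihN => intro k; exact Approx.app (ihM k) (ihN k)

theorem approx_subst : ∀ {A B : Tm}, Approx A B → ∀ {Q Q' : Tm}, Approx Q Q' → ∀ k,
    Approx (Tm.subst A k Q) (Tm.subst B k Q') := by
  intro A B h
  induction h with
  | bot hns =>
      intro Q Q' hQ k
      exact Approx.bot (fun hs => hns (sol_subst_refl hs rfl))
  | var n =>
      intro Q Q' hQ k
      show Approx (Tm.subst (.var n) k Q) (Tm.subst (.var n) k Q')
      unfold Tm.subst
      split_ifs
      · exact Approx.rfl _
      · exact hQ
      · exact Approx.rfl _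
  | botr => intro Q Q' hQ k; exact Approx.botr
  | lam _ ih => intro Q Q' hQ k; exact Approx.lam (ih (approx_lift hQ 0) (k+1))
  | app _ _ ihM ihN => intro Q Q' hQ k; exact Approx.app (ihM hQ k) (ihN hQ k)

theorem red_appL {M M' : Tm} (N : Tm) (h : Tm.Red M M') :
    Tm.Red (.app M N) (.app M' N) := by
  induction h with
  | refl => exact Relation.ReflTransGen.refl
  | tail _ hstep ih => exact Relation.ReflTransGen.tail ih (Tm.Step.appL N hstep)

theorem red_appR (M : Tm) {N N' : Tm} (h : Tm.Red N N') :
    Tm.Red (.app M N) (.app M N') := by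
  induction h with
  | refl => exact Relation.ReflTransGen.refl
  | tail _ hstep ih => exact Relation.ReflTransGen.tail ih (Tm.Step.appR M hstep)

theorem approx_step : ∀ {T T' : Tm}, Tm.Step T T' → ∀ {U : Tm}, Approx T U →
    ∃ U', Tm.Red U U' ∧ Approx T' U' := by
  intro T T' hstep
  induction hstep with
  | beta P Q =>
      intro U hU
      cases hU with
      | bot hns =>
          refine ⟨.bot, Relation.ReflTransGen.refl, Approx.bot ?_⟩
          exact fun hs => hns (sol_par_expansion (step_to_par (Tm.Step.beta P Q)) hs)
      | app hU1 hU2 =>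
          rename_i B D
          cases hU1 with
          | bot hns =>
              refine ⟨.bot, Relation.ReflTransGen.single (Tm.Step.botApp D), Approx.bot ?_⟩
              intro hs
              exact hns (Sol.lam (Ev'.refl (whn_lam P)) (sol_subst_refl hs rfl))
          | lam hP =>
              rename_i B'
              exact ⟨Tm.subst B' 0 D, Relation.ReflTransGen.single (Tm.Step.beta B' D),
                approx_subst hP hU2 0⟩
  | botApp N =>
      intro U hU
      cases hU with
      | bot hns => exact ⟨.bot, Relation.ReflTransGen.refl, Approx.botr⟩
      | app hU1 hU2 =>
          rename_i B D
          have : B = .bot := approx_bot_src hU1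
          subst this
          exact ⟨.bot, Relation.ReflTransGen.single (Tm.Step.botApp D), Approx.botr⟩
  | botLam =>
      intro U hU
      cases hU with
      | bot hns => exact ⟨.bot, Relation.ReflTransGen.refl, Approx.botr⟩
      | lam hA =>
          rename_i B
          have : B = .bot := approx_bot_src hA
          subst this
          exact ⟨.bot, Relation.ReflTransGen.single Tm.Step.botLam, Approx.botr⟩
  | @appL M M' N hstepM ih =>
      intro U hU
      cases hU with
      | bot hns =>
          refine ⟨.bot, Relation.ReflTransGen.refl, Approx.bot ?_⟩
          exact fun hs => hns
            (sol_par_expansion (Par.app (step_to_par hstepM) (Par.rfl N)) hs)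
      | app hU1 hU2 =>
          obtain ⟨U1, hred, hap⟩ := ih hU1
          exact ⟨.app U1 _, red_appL _ hred, Approx.app hap hU2⟩
  | @appR M N N' hstepN ih =>
      intro U hU
      cases hU with
      | bot hns =>
          refine ⟨.bot, Relation.ReflTransGen.refl, Approx.bot ?_⟩
          exact fun hs => hns
            (sol_par_expansion (Par.app (Par.rfl M) (step_to_par hstepN)) hs)
      | app hU1 hU2 =>
          obtain ⟨U2, hred, hap⟩ := ih hU2
          exact ⟨.app _ U2, red_appR _ hred, Approx.app hU1 hap⟩
  | @lamC M M' hstepM ih =>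
      intro U hU
      cases hU with
      | bot hns =>
          refine ⟨.bot, Relation.ReflTransGen.refl, Approx.bot ?_⟩
          exact fun hs => hns (sol_par_expansion (Par.lam (step_to_par hstepM)) hs)
      | lam hA =>
          obtain ⟨U1, hred, hap⟩ := ih hA
          exact ⟨.lam U1, red_lam hred, Approx.lam hap⟩

theorem approx_red : ∀ {T Z : Tm}, Tm.Red T Z → ∀ {U : Tm}, Approx T U →
    ∃ U', Tm.Red U U' ∧ Approx Z U' := by
  intro T Z hred
  induction hred using Relation.ReflTransGen.head_induction_on with
  | refl => exact fun hU => ⟨_, Relation.ReflTransGen.refl, hU⟩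
  | head hstep _ ih =>
      intro U hU
      obtain ⟨U1, hred1, hap1⟩ := approx_step hstep hU
      obtain ⟨U', hred2, hap2⟩ := ih hap1
      exact ⟨U', Relation.ReflTransGen.trans hred1 hred2, hap2⟩

theorem approx_var0 {U : Tm} (h : Approx (.var 0) U) : U = .var 0 := by
  cases h with
  | bot hns =>
      exact absurd (Sol.neu (Ev'.refl (whn_var 0)) (NeuT.var 0)) hns
  | var => rfl

/-! ### Top-level lemmas -/

theorem red_iTm : ∀ {P : Tm}, Tm.Red Tm.iTm P → P = Tm.iTm := by
  intro P h
  rcases Relation.ReflTransGen.cases_head h with rfl | ⟨Y, hstep, _⟩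
  · rfl
  · exfalso
    cases hstep with
    | lamC h => cases h

theorem red_lam_inv : ∀ {X Z : Tm}, Tm.Red X Z → ∀ {B : Tm}, X = .lam B →
    Z = .bot ∨ ∃ B', Z = .lam B' ∧ Tm.Red B B' := by
  intro X Z h
  induction h with
  | refl => rintro B rfl; exact Or.inr ⟨B, rfl, Relation.ReflTransGen.refl⟩
  | tail _ hstep ih =>
      rintro B rfl
      rcases ih rfl with rfl | ⟨B', rfl, hred⟩
      · cases hstep
      · cases hstep with
        | botLam => exact Or.inl rfl
        | lamC h =>
            exact Or.inr ⟨_, rfl, Relation.ReflTransGen.tail hred h⟩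

theorem conv_iTm {X : Tm} (h : Tm.Conv X Tm.iTm) : Tm.Red X Tm.iTm := by
  obtain ⟨P, h1, h2⟩ := h
  rw [red_iTm h2] at h1
  exact h1

theorem red_lift_shape : ∀ {X Z : Tm}, Tm.Red X Z → ∀ {T : Tm} {k}, X = Tm.lift T k →
    ∃ T', Z = Tm.lift T' k := by
  intro X Z h
  induction h with
  | refl => rintro T k rfl; exact ⟨T, rfl⟩
  | tail _ hstep ih =>
      rintro T k rfl
      obtain ⟨T₁, rfl⟩ := ih rfl
      exact step_lift_shape T₁ hstep

/-- From `comp A B` reducing to `I`, extract the body reduction. -/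
theorem comp_red_body {A B : Tm} (h : Tm.Red (Tm.comp A B) Tm.iTm) :
    Tm.Red (.app (Tm.lift A 0) (.app (Tm.lift B 0) (.var 0))) (.var 0) := by
  have h2 := red_lam_inv h (B := .app (Tm.lift A 0) (.app (Tm.lift B 0) (.var 0))) rfl
  rcases h2 with hbot | ⟨B', hB', hred⟩
  · cases hbot
  · cases hB'
    exact hred

theorem no_left_inverse {M : Tm} (h : ¬ Solvable M) (L : Tm)
    (hC : Tm.Conv (Tm.comp L M) Tm.iTm) : False := by
  have hnsM : ¬ Sol M := fun hs => h (sol_solvable hs)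
  have hnsLM : ¬ Sol (Tm.lift M 0) := fun hs => hnsM (sol_lift_refl hs rfl)
  have hbody := comp_red_body (conv_iTm hC)
  -- First approximation: replace (lift M 0) by ⊥.
  have hap1 : Approx (.app (Tm.lift L 0) (.app (Tm.lift M 0) (.var 0)))
      (.app (Tm.lift L 0) (.app .bot (.var 0))) :=
    Approx.app (Approx.rfl _) (Approx.app (Approx.bot hnsLM) (Approx.var 0))
  obtain ⟨U', hredU, hapU⟩ := approx_red hbody hap1
  rw [approx_var0 hapU] at hredU
  -- Second approximation: replace (⊥ x) by ⊥.
  have hap2 : Approx (.app (Tm.lift L 0) (.app .bot (.var 0)))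
      (.app (Tm.lift L 0) .bot) :=
    Approx.app (Approx.rfl _) (Approx.bot sol_app_bot_false)
  obtain ⟨U₂, hredU₂, hapU₂⟩ := approx_red hredU hap2
  rw [approx_var0 hapU₂] at hredU₂
  -- But app (lift L 0) ⊥ = lift (app L ⊥) 0 cannot reduce to var 0.
  obtain ⟨T', hT'⟩ := red_lift_shape hredU₂
    (T := .app L .bot) (k := 0) rfl
  exact lift_ne_var0 T' hT'.symm

theorem no_right_inverse {M : Tm} (h : ¬ Solvable M) (R : Tm)
    (hC : Tm.Conv (Tm.comp M R) Tm.iTm) : False := by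
  have hnsM : ¬ Sol M := fun hs => h (sol_solvable hs)
  have hnsLM : ¬ Sol (Tm.lift M 0) := fun hs => hnsM (sol_lift_refl hs rfl)
  have hbody := comp_red_body (conv_iTm hC)
  have hap1 : Approx (.app (Tm.lift M 0) (.app (Tm.lift R 0) (.var 0)))
      (.app .bot (.app (Tm.lift R 0) (.var 0))) :=
    Approx.app (Approx.bot hnsLM) (Approx.rfl _)
  obtain ⟨U', hredU, hapU⟩ := approx_red hbody hap1
  rw [approx_var0 hapU] at hredU
  have hsol : Sol (.app .bot (.app (Tm.lift R 0) (.var 0))) :=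
    sol_red_expansion hredU (Sol.neu (Ev'.refl (whn_var 0)) (NeuT.var 0))
  exact sol_app_bot_false hsol

end NoInv
end NoInv
/-- an unsolvable term has neither a left nor a right inverse. -/
theorem unsolvable_no_inverse {M : Tm} (h : ¬ Solvable M) :
    (∀ L, ¬ Tm.Conv (Tm.comp L M) Tm.iTm) ∧ (∀ R, ¬ Tm.Conv (Tm.comp M R) Tm.iTm) := by
  exact ⟨fun L hC => NoInv.no_left_inverse h L hC,
         fun R hC => NoInv.no_right_inverse h R hC⟩
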